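/- Irreducible mixture proportion identity: if P = πP_+ + (1−π)P_− are probability measures on (ℝ^d, 𝔖) and P_− is irreducible with respect to P_+, then π = max{ κ ∈ [0,1] : ∃ probability measure Q with P = κP_+ + (1−κ)Q } = inf_{S ∈ 𝔖, P_+(S) > 0} P(S)/P_+(S). -/

import Mathlib

open MeasureTheory

/-- `G` is irreducible with respect to `H`: there is no decomposition
`G = κ H + (1 − κ) H'` with `H'` a probability measure and `0 < κ ≤ 1`. -/
def IrreducibleWrt {d : ℕ} (G H : Measure (Fin d → ℝ)) : Prop :=
  ¬ ∃ (κ : ℝ) (H' : Measure (Fin d → ℝ)), 0 < κ ∧ κ ≤ 1 ∧ IsProbabilityMeasure H' ∧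
      G = ENNReal.ofReal κ • H + ENNReal.ofReal (1 - κ) • H'

/-- Evaluate a mixture of finite measures in real numbers. -/
lemma mixR {α : Type*} [MeasurableSpace α] (μ ν ρ : Measure α) [IsFiniteMeasure ν]
    [IsFiniteMeasure ρ] {x : ℝ} (h0 : 0 ≤ x) (h1 : x ≤ 1)
    (h : μ = ENNReal.ofReal x • ν + ENNReal.ofReal (1 - x) • ρ) (s : Set α) :
    (μ s).toReal = x * (ν s).toReal + (1 - x) * (ρ s).toReal := by
  rw [h, Measure.add_apply, Measure.smul_apply, Measure.smul_apply, smul_eq_mul, smul_eq_mul,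
    ENNReal.toReal_add (ENNReal.mul_ne_top ENNReal.ofReal_ne_top (measure_ne_top _ _))
      (ENNReal.mul_ne_top ENNReal.ofReal_ne_top (measure_ne_top _ _)),
    ENNReal.toReal_mul, ENNReal.toReal_mul, ENNReal.toReal_ofReal h0,
    ENNReal.toReal_ofReal (by linarith)]

/-- under irreducibility, the class-prior is the maximum mixture
proportion and the infimum of `P(S)/P₊(S)`. -/
theorem irreducible_mixture_proportion {d : ℕ} (P Pp Pm : Measure (Fin d → ℝ))
    [IsProbabilityMeasure P] [IsProbabilityMeasure Pp] [IsProbabilityMeasure Pm]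
    (pr : ℝ) (hpr : pr ∈ Set.Icc (0:ℝ) 1)
    (hmix : P = ENNReal.ofReal pr • Pp + ENNReal.ofReal (1 - pr) • Pm)
    (hirr : IrreducibleWrt Pm Pp) :
    IsGreatest {κ : ℝ | κ ∈ Set.Icc (0:ℝ) 1 ∧ ∃ Q : Measure (Fin d → ℝ),
        IsProbabilityMeasure Q ∧
        P = ENNReal.ofReal κ • Pp + ENNReal.ofReal (1 - κ) • Q} pr
      ∧ pr = sInf {t : ℝ | ∃ S : Set (Fin d → ℝ), MeasurableSet S ∧ 0 < Pp S ∧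
          t = (P S).toReal / (Pp S).toReal} := by
  obtain ⟨hpr0, hpr1⟩ := hpr
  set T := {t : ℝ | ∃ S : Set (Fin d → ℝ), MeasurableSet S ∧ 0 < Pp S ∧
      t = (P S).toReal / (Pp S).toReal} with hT
  have hPR := mixR P Pp Pm hpr0 hpr1 hmix
  -- 1 ∈ T
  have h1T : (1:ℝ) ∈ T := by
    refine ⟨Set.univ, MeasurableSet.univ, by simp, ?_⟩
    simp [measure_univ]
  -- pr is a lower bound of T
  have hlb : ∀ t ∈ T, pr ≤ t := by
    rintro t ⟨S, hS, hSpos, rfl⟩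
    have ha : 0 < (Pp S).toReal := ENNReal.toReal_pos hSpos.ne' (measure_ne_top _ _)
    rw [le_div_iff₀ ha, hPR S]
    nlinarith [ENNReal.toReal_nonneg (a := Pm S), ENNReal.toReal_nonneg (a := Pp S)]
  have hbdd : BddBelow T := ⟨pr, hlb⟩
  constructor
  · constructor
    · exact ⟨⟨hpr0, hpr1⟩, Pm, inferInstance, hmix⟩
    · rintro κ ⟨⟨hκ0, hκ1⟩, Q, hQ, hPeq⟩
      by_contra hlt
      push_neg at hlt
      have h1p : (0:ℝ) < 1 - pr := by linarith
      have hQR := mixR P Pp Q hκ0 hκ1 hPeq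
      apply hirr
      refine ⟨(κ - pr) / (1 - pr), Q, div_pos (by linarith) h1p,
        (div_le_one h1p).mpr (by linarith), hQ, ?_⟩
      ext s hs
      have key : (Pm s).toReal =
          (κ - pr) / (1 - pr) * (Pp s).toReal + (1 - (κ - pr) / (1 - pr)) * (Q s).toReal := by
        have e := (hPR s).symm.trans (hQR s)
        have hco : 1 - (κ - pr) / (1 - pr) = (1 - κ) / (1 - pr) := by field_simp; ring
        rw [hco]
        field_simp
        nlinarith [e]
      have hb : Pm s = ENNReal.ofReal
          ((κ - pr) / (1 - pr) * (Pp s).toReal + (1 - (κ - pr) / (1 - pr)) * (Q s).toReal) := by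
        rw [← key, ENNReal.ofReal_toReal (measure_ne_top _ _)]
      have hd1 : (0:ℝ) ≤ (κ - pr) / (1 - pr) := div_nonneg (by linarith) (by linarith)
      have hd2 : (0:ℝ) ≤ 1 - (κ - pr) / (1 - pr) :=
        sub_nonneg.mpr ((div_le_one h1p).mpr (by linarith))
      rw [Measure.add_apply, Measure.smul_apply, Measure.smul_apply, smul_eq_mul, smul_eq_mul,
        hb, ENNReal.ofReal_add (mul_nonneg hd1 ENNReal.toReal_nonneg)
          (mul_nonneg hd2 ENNReal.toReal_nonneg),
        ENNReal.ofReal_mul hd1, ENNReal.ofReal_mul hd2,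
        ENNReal.ofReal_toReal (measure_ne_top _ _), ENNReal.ofReal_toReal (measure_ne_top _ _)]
  · -- pr = sInf T
    refine le_antisymm (le_csInf ⟨1, h1T⟩ hlb) ?_
    rcases eq_or_lt_of_le hpr1 with hpr1' | hpr1'
    · calc sInf T ≤ 1 := csInf_le hbdd h1T
        _ = pr := hpr1'.symm
    by_contra hlt
    push_neg at hlt
    set c0 := sInf T with hc0
    have hc01 : c0 ≤ 1 := csInf_le hbdd h1T
    have h1p : (0:ℝ) < 1 - pr := by linarith
    set κ' : ℝ := (c0 - pr) / (1 - pr) / 2 with hκ'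
    have hκ'pos : 0 < κ' := by
      have := div_pos (show (0:ℝ) < c0 - pr by linarith) h1p
      positivity
    have hκ'lt : κ' < 1 := by
      have h1 : (c0 - pr) / (1 - pr) ≤ 1 := (div_le_one h1p).mpr (by linarith)
      linarith
    -- the key domination: ofReal κ' • Pp ≤ Pm
    have hdom : ENNReal.ofReal κ' • Pp ≤ Pm := by
      rw [Measure.le_iff]
      intro s hs
      rw [Measure.smul_apply, smul_eq_mul]
      rcases eq_or_lt_of_le (zero_le : 0 ≤ Pp s) with hz | hz
      · rw [← hz, mul_zero]; exact zero_le
      · have ht : (P s).toReal / (Pp s).toReal ∈ T := ⟨s, hs, hz, rfl⟩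
        have hc0t := csInf_le hbdd ht
        have ha : 0 < (Pp s).toReal := ENNReal.toReal_pos hz.ne' (measure_ne_top _ _)
        rw [← hc0] at hc0t
        have hreal : κ' * (Pp s).toReal ≤ (Pm s).toReal := by
          rw [le_div_iff₀ ha] at hc0t
          rw [hPR s] at hc0t
          have hκ'2 : κ' * (1 - pr) * 2 = c0 - pr := by
            rw [hκ', div_div, mul_assoc, div_mul_cancel₀ _ (mul_pos h1p two_pos).ne']
          nlinarith [ENNReal.toReal_nonneg (a := Pp s), ENNReal.toReal_nonneg (a := Pm s)]
        calc ENNReal.ofReal κ' * Pp s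
            = ENNReal.ofReal κ' * ENNReal.ofReal (Pp s).toReal := by
              rw [ENNReal.ofReal_toReal (measure_ne_top _ _)]
          _ = ENNReal.ofReal (κ' * (Pp s).toReal) := by
              rw [ENNReal.ofReal_mul hκ'pos.le]
          _ ≤ ENNReal.ofReal (Pm s).toReal := ENNReal.ofReal_le_ofReal hreal
          _ = Pm s := ENNReal.ofReal_toReal (measure_ne_top _ _)
    haveI hfin : IsFiniteMeasure (ENNReal.ofReal κ' • Pp) := by
      constructor
      rw [Measure.smul_apply, smul_eq_mul, measure_univ, mul_one]
      exact ENNReal.ofReal_lt_top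
    set ν : Measure (Fin d → ℝ) := Pm - ENNReal.ofReal κ' • Pp with hν
    have hνuniv : ν Set.univ = ENNReal.ofReal (1 - κ') := by
      rw [hν, Measure.sub_apply MeasurableSet.univ hdom, Measure.smul_apply, smul_eq_mul]
      simp only [measure_univ, mul_one]
      rw [ENNReal.ofReal_sub _ hκ'pos.le, ENNReal.ofReal_one]
    have hone : ENNReal.ofReal (1 - κ') ≠ 0 := by
      simp only [ne_eq, ENNReal.ofReal_eq_zero, not_le]; linarith
    set H' : Measure (Fin d → ℝ) := (ENNReal.ofReal (1 - κ'))⁻¹ • ν with hH'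
    have hH'prob : IsProbabilityMeasure H' := by
      constructor
      rw [hH', Measure.smul_apply, smul_eq_mul, hνuniv,
        ENNReal.inv_mul_cancel hone ENNReal.ofReal_ne_top]
    apply hirr
    refine ⟨κ', H', hκ'pos, hκ'lt.le, hH'prob, ?_⟩
    have hsm : ENNReal.ofReal (1 - κ') • H' = ν := by
      rw [hH', smul_smul, ENNReal.mul_inv_cancel hone ENNReal.ofReal_ne_top, one_smul]
    rw [hsm, hν, add_comm, Measure.sub_add_cancel_of_le hdom]
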